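/- arXiv:1305.7011 — 4 statements merged into one kernel-verified Lean document; each statement's English description precedes it below -/
import Mathlib

section
/- Let p be a prime, and let λ₁ ≥ λ₂ and μ₁ ≥ μ₂ be integers with λ₁+λ₂ ≠ μ₁+μ₂. Suppose real (or complex) numbers a_F(p^r), a_G(p^r) for r = 1,2,3 satisfy the relations a(p³) − 2a(p)a(p²) + a(p)³ − p^{w−4}(p+1)a(p) = 0, where w = λ₁+λ₂ for the a_F sequence and w = μ₁+μ₂ for the a_G sequence. If a_F(p) ≠ 0 (or a_G(p) ≠ 0), then (a_F(p), a_F(p²), a_F(p³)) ≠ (a_G(p), a_G(p²), a_G(p³)). -/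
/-- If the eigenvalue triples of two degree-2 Siegel eigenforms of distinct total
weights satisfy the cubic Hecke relation and one of `a_F(p)`, `a_G(p)` is nonzero,
then the triples `(a(p), a(p²), a(p³))` differ. -/
theorem stmt5 (p : ℕ) (hp : p.Prime) (l1 l2 m1 m2 : ℤ) (hl : l2 ≤ l1) (hm : m2 ≤ m1)
    (hw : l1 + l2 ≠ m1 + m2) (aF1 aF2 aF3 aG1 aG2 aG3 : ℂ)
    (hF : aF3 - 2 * aF1 * aF2 + aF1 ^ 3
        - (p : ℂ) ^ (l1 + l2 - 4) * ((p : ℂ) + 1) * aF1 = 0)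
    (hG : aG3 - 2 * aG1 * aG2 + aG1 ^ 3
        - (p : ℂ) ^ (m1 + m2 - 4) * ((p : ℂ) + 1) * aG1 = 0)
    (ha : aF1 ≠ 0 ∨ aG1 ≠ 0) :
    (aF1, aF2, aF3) ≠ (aG1, aG2, aG3) := by
  intro h
  obtain ⟨h1, h2, h3⟩ : aF1 = aG1 ∧ aF2 = aG2 ∧ aF3 = aG3 := by
    simpa [Prod.ext_iff] using h
  subst h1; subst h2; subst h3
  have ha1 : aF1 ≠ 0 := ha.elim id id
  have hsub : ((p : ℂ) ^ (l1 + l2 - 4) - (p : ℂ) ^ (m1 + m2 - 4))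
      * (((p : ℂ) + 1) * aF1) = 0 := by linear_combination hG - hF
  have hp1 : (p : ℂ) + 1 ≠ 0 := by
    exact_mod_cast Nat.cast_add_one_ne_zero (R := ℂ) p
  have heq : (p : ℂ) ^ (l1 + l2 - 4) = (p : ℂ) ^ (m1 + m2 - 4) := by
    rcases mul_eq_zero.mp hsub with h' | h'
    · exact sub_eq_zero.mp h'
    · exact absurd h' (mul_ne_zero hp1 ha1)
  have habs : (p : ℝ) ^ (l1 + l2 - 4) = (p : ℝ) ^ (m1 + m2 - 4) := by
    have := congrArg (fun z : ℂ => ‖z‖) heq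
    simpa [map_zpow₀, Complex.norm_natCast] using this
  have hp0 : (0 : ℝ) < p := by exact_mod_cast hp.pos
  have hpne1 : (p : ℝ) ≠ 1 := by exact_mod_cast hp.one_lt.ne'
  have := zpow_right_injective₀ hp0 hpne1 habs
  omega
end

section
/- Let p be a prime and λ₁+λ₂ ≠ μ₁+μ₂ be integers (sums of the weight pairs). Suppose complex numbers a(p²), a(p⁴), a(p⁶) simultaneously satisfy, for both w = λ₁+λ₂ and w = μ₁+μ₂, the relations a(p⁴) − a(p²)² − p^{w−4}a(p²) + p^{2w−6} = 0 and a(p⁶) − a(p⁴)a(p²) − p^{w−4}a(p⁴) + p^{2w−6}a(p²) = 0. Then no such triple (a(p²), a(p⁴), a(p⁶)) exists; i.e., the two systems of relations for distinct w are inconsistent. -/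
/-- The quartic and sextic Hecke relations for two distinct total weights `w1 ≠ w2`
cannot be satisfied simultaneously by a common triple `(a(p²), a(p⁴), a(p⁶))`. -/
theorem stmt6 (p : ℕ) (hp : p.Prime) (w1 w2 : ℤ) (hw : w1 ≠ w2) (a2 a4 a6 : ℂ)
    (h1 : a4 - a2 ^ 2 - (p : ℂ) ^ (w1 - 4) * a2 + (p : ℂ) ^ (2 * w1 - 6) = 0)
    (h2 : a6 - a4 * a2 - (p : ℂ) ^ (w1 - 4) * a4 + (p : ℂ) ^ (2 * w1 - 6) * a2 = 0)
    (h3 : a4 - a2 ^ 2 - (p : ℂ) ^ (w2 - 4) * a2 + (p : ℂ) ^ (2 * w2 - 6) = 0)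
    (h4 : a6 - a4 * a2 - (p : ℂ) ^ (w2 - 4) * a4 + (p : ℂ) ^ (2 * w2 - 6) * a2 = 0) :
    False := by
  have hp0 : (p : ℂ) ≠ 0 := Nat.cast_ne_zero.mpr hp.ne_zero
  set x : ℂ := (p : ℂ) ^ (w1 - 4) with hxdef
  set y : ℂ := (p : ℂ) ^ (w2 - 4) with hydef
  have hx0 : x ≠ 0 := zpow_ne_zero _ hp0
  have hy0 : y ≠ 0 := zpow_ne_zero _ hp0
  have hrw1 : (p : ℂ) ^ (2 * w1 - 6) = x * x * (p : ℂ) ^ 2 := by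
    have h : 2 * w1 - 6 = (w1 - 4) + (w1 - 4) + 2 := by ring
    have h2' : ((p:ℂ)) ^ (2:ℤ) = (p:ℂ) ^ 2 := by rw [zpow_two]; ring
    rw [h, zpow_add₀ hp0, zpow_add₀ hp0, hxdef, h2']
  have hrw2 : (p : ℂ) ^ (2 * w2 - 6) = y * y * (p : ℂ) ^ 2 := by
    have h : 2 * w2 - 6 = (w2 - 4) + (w2 - 4) + 2 := by ring
    have h2' : ((p:ℂ)) ^ (2:ℤ) = (p:ℂ) ^ 2 := by rw [zpow_two]; ring
    rw [h, zpow_add₀ hp0, zpow_add₀ hp0, hydef, h2']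
  rw [hrw1] at h1 h2
  rw [hrw2] at h3 h4
  -- x ≠ y since w1 ≠ w2 and p > 1
  have hxy : x ≠ y := by
    intro h
    apply hw
    have hinj : w1 - 4 = w2 - 4 := by
      have h1R : ((p : ℝ) : ℂ) ^ (w1 - 4) = ((p : ℝ) : ℂ) ^ (w2 - 4) := by
        push_cast; exact h
      have hR : (p : ℝ) ^ (w1 - 4) = (p : ℝ) ^ (w2 - 4) := by
        exact_mod_cast h1R
      have hpR : 1 < (p : ℝ) := by exact_mod_cast hp.one_lt
      exact zpow_right_injective₀ (by positivity) hpR.ne' hR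
    omega
  have hd : x - y ≠ 0 := sub_ne_zero.mpr hxy
  have key : (p : ℂ) ^ 2 * x * y * (x - y) ^ 2 = 0 := by
    linear_combination
      (-(x-y)^2 + (p:ℂ)^2*(x+y)*(x-y) + x*(x-y) + ((x-y)*a2 - (p:ℂ)^2*(x+y)*(x-y))) * h1
      + (-(x-y)) * h2
      + (-(p:ℂ)^2*(x+y)*(x-y) - x*(x-y) - ((x-y)*a2 - (p:ℂ)^2*(x+y)*(x-y))) * h3
      + (x-y) * h4
  have : (p : ℂ) ^ 2 * x * y * (x - y) ^ 2 ≠ 0 := by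
    apply mul_ne_zero (mul_ne_zero (mul_ne_zero (pow_ne_zero _ hp0) hx0) hy0)
      (pow_ne_zero _ hd)
  exact this key
end

section
/- For every integer N ≥ 1, there exists a prime p not dividing N with p ≤ 2·log(N) + 2. -/
set_option maxRecDepth 40000
set_option maxHeartbeats 2000000

open Nat Finset

namespace Stmt11Aux

lemma primorial_mono {a b : ℕ} (h : a ≤ b) : primorial a ≤ primorial b := by
  apply Finset.prod_le_prod_of_subset_of_one_le'
  · exact Finset.filter_subset_filter _ (Finset.range_subset_range.2 (by omega))
  · intro p hp _
    exact (Finset.mem_filter.1 hp).2.one_lt.le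

lemma list_prod_le_primorial (l : List ℕ) (n : ℕ) (hp : ∀ p ∈ l, p.Prime)
    (hle : ∀ p ∈ l, p ≤ n) (nd : l.Nodup) : l.prod ≤ primorial n := by
  have h1 : l.prod = ∏ p ∈ l.toFinset, p := by
    rw [List.prod_toFinset _ nd]
    simp
  rw [h1, primorial]
  apply Finset.prod_le_prod_of_subset_of_one_le'
  · intro p hp'
    rw [List.mem_toFinset] at hp'
    exact Finset.mem_filter.2 ⟨Finset.mem_range.2 (Nat.lt_succ_of_le (hle p hp')), hp p hp'⟩
  · intro p hq _
    exact (Finset.mem_filter.1 hq).2.one_lt.le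

lemma interval_step (l : List ℕ) (a b n : ℕ) (hp : ∀ p ∈ l, p.Prime)
    (hla : ∀ p ∈ l, p ≤ a) (nd : l.Nodup) (han : a ≤ n) (hnb : n ≤ b) (hb : 1 ≤ b)
    (hnum : 68 ^ (b - 1) ≤ l.prod ^ 2 * 25 ^ (b - 1)) :
    Real.exp (((n : ℝ) - 1) / 2) ≤ (primorial n : ℝ) := by
  have hL : l.prod ≤ primorial n :=
    list_prod_le_primorial l n hp (fun p h => (hla p h).trans han) nd
  have h1 : Real.exp (((n : ℝ) - 1) / 2) ≤ Real.exp (((b : ℝ) - 1) / 2) := by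
    have : (n : ℝ) ≤ (b : ℝ) := by exact_mod_cast hnb
    apply Real.exp_le_exp.2
    linarith
  have hL' : (l.prod : ℝ) ≤ (primorial n : ℝ) := by exact_mod_cast hL
  have h0 : (0 : ℝ) ≤ Real.exp (((b : ℝ) - 1) / 2) := (Real.exp_pos _).le
  have hLr : (0 : ℝ) ≤ (l.prod : ℝ) := Nat.cast_nonneg _
  have hsq : Real.exp (((b : ℝ) - 1) / 2) ^ 2 ≤ (l.prod : ℝ) ^ 2 := by
    have e1 : Real.exp (((b : ℝ) - 1) / 2) ^ 2 = Real.exp ((b : ℝ) - 1) := by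
      rw [← Real.exp_nat_mul]
      congr 1
      push_cast
      ring
    have e2 : ((b : ℝ) - 1) = ((b - 1 : ℕ) : ℝ) := by
      have : (1 : ℕ) ≤ b := hb
      push_cast [this]
      ring
    have e3 : Real.exp (((b - 1 : ℕ) : ℝ)) = Real.exp 1 ^ (b - 1) := by
      rw [← Real.exp_nat_mul, mul_one]
    rw [e1, e2, e3]
    have e4 : Real.exp 1 ^ (b - 1) ≤ (68 / 25 : ℝ) ^ (b - 1) := by
      apply pow_le_pow_left₀ (Real.exp_pos 1).le
      refine Real.exp_one_lt_d9.le.trans (by norm_num)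
    refine e4.trans ?_
    rw [div_pow, div_le_iff₀ (by positivity)]
    exact_mod_cast hnum
  have key : Real.exp (((b : ℝ) - 1) / 2) ≤ (l.prod : ℝ) :=
    calc Real.exp (((b : ℝ) - 1) / 2)
        = Real.sqrt (Real.exp (((b : ℝ) - 1) / 2) ^ 2) := (Real.sqrt_sq h0).symm
      _ ≤ Real.sqrt ((l.prod : ℝ) ^ 2) := Real.sqrt_le_sqrt hsq
      _ = (l.prod : ℝ) := Real.sqrt_sq hLr
  exact h1.trans (key.trans hL')

lemma finite_part (n : ℕ) (h2 : 2 ≤ n) (hn : n ≤ 3601) :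
    Real.exp (((n : ℝ) - 1) / 2) ≤ (primorial n : ℝ) := by
  rcases le_or_gt n 2 with hb0 | ha0
  · refine interval_step [2] 2 2 n (by decide) (by decide) (by decide) (by omega) hb0 (by norm_num) ?_
    have hpl : List.prod [2] = 2 := by norm_num
    rw [hpl]
    norm_num
  rcases le_or_gt n 4 with hb1 | ha1
  · refine interval_step [2, 3] 3 4 n (by decide) (by decide) (by decide) (by omega) hb1 (by norm_num) ?_
    have hpl : List.prod [2, 3] = 6 := by norm_num
    rw [hpl]
    norm_num
  rcases le_or_gt n 7 with hb2 | ha2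
  · refine interval_step [2, 3, 5] 5 7 n (by decide) (by decide) (by decide) (by omega) hb2 (by norm_num) ?_
    have hpl : List.prod [2, 3, 5] = 30 := by norm_num
    rw [hpl]
    norm_num
  rcases le_or_gt n 11 with hb3 | ha3
  · refine interval_step [2, 3, 5, 7] 8 11 n (by decide) (by decide) (by decide) (by omega) hb3 (by norm_num) ?_
    have hpl : List.prod [2, 3, 5, 7] = 210 := by norm_num
    rw [hpl]
    norm_num
  rcases le_or_gt n 16 with hb4 | ha4
  · refine interval_step [2, 3, 5, 7, 11] 12 16 n (by decide) (by decide) (by decide) (by omega) hb4 (by norm_num) ?_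
    have hpl : List.prod [2, 3, 5, 7, 11] = 2310 := by norm_num
    rw [hpl]
    norm_num
  rcases le_or_gt n 27 with hb5 | ha5
  · refine interval_step [2, 3, 5, 7, 11, 13, 17] 17 27 n (by decide) (by decide) (by decide) (by omega) hb5 (by norm_num) ?_
    have hpl : List.prod [2, 3, 5, 7, 11, 13, 17] = 510510 := by norm_num
    rw [hpl]
    norm_num
  rcases le_or_gt n 39 with hb6 | ha6
  · refine interval_step [2, 3, 5, 7, 11, 13, 17, 19, 23] 28 39 n (by decide) (by decide) (by decide) (by omega) hb6 (by norm_num) ?_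
    have hpl : List.prod [2, 3, 5, 7, 11, 13, 17, 19, 23] = 223092870 := by norm_num
    rw [hpl]
    norm_num
  rcases le_or_gt n 60 with hb7 | ha7
  · refine interval_step [2, 3, 5, 7, 11, 13, 17, 19, 23, 29, 31, 37] 40 60 n (by decide) (by decide) (by decide) (by omega) hb7 (by norm_num) ?_
    have hpl : List.prod [2, 3, 5, 7, 11, 13, 17, 19, 23, 29, 31, 37] = 7420738134810 := by norm_num
    rw [hpl]
    norm_num
  rcases le_or_gt n 107 with hb8 | ha8
  · refine interval_step [2, 3, 5, 7, 11, 13, 17, 19, 23, 29, 31, 37, 41, 43, 47, 53, 59, 61] 61 107 n (by decide) (by decide) (by decide) (by omega) hb8 (by norm_num) ?_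
    have hpl : List.prod [2, 3, 5, 7, 11, 13, 17, 19, 23, 29, 31, 37, 41, 43, 47, 53, 59, 61] = 117288381359406970983270 := by norm_num
    rw [hpl]
    norm_num
  rcases le_or_gt n 196 with hb9 | ha9
  · refine interval_step [2, 3, 5, 7, 11, 13, 17, 19, 23, 29, 31, 37, 41, 43, 47, 53, 59, 61, 67, 71, 73, 79, 83, 89, 97, 101, 103, 107] 108 196 n (by simp only [List.forall_mem_cons, List.forall_mem_nil]; and_intros <;> norm_num) (by decide) (by decide) (by omega) hb9 (by norm_num) ?_
    have hpl : List.prod [2, 3, 5, 7, 11, 13, 17, 19, 23, 29, 31, 37, 41, 43, 47, 53, 59, 61, 67, 71, 73, 79, 83, 89, 97, 101, 103, 107] = 2566376117594999414479597815340071648394470 := by norm_num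
    rw [hpl]
    norm_num
  rcases le_or_gt n 367 with hb10 | ha10
  · refine interval_step [2, 3, 5, 7, 11, 13, 17, 19, 23, 29, 31, 37, 41, 43, 47, 53, 59, 61, 67, 71, 73, 79, 83, 89, 97, 101, 103, 107, 109, 113, 127, 131, 137, 139, 149, 151, 157, 163, 167, 173, 179, 181, 191, 193, 197] 197 367 n (by simp only [List.forall_mem_cons, List.forall_mem_nil]; and_intros <;> norm_num) (by decide) (by decide) (by omega) hb10 (by norm_num) ?_
    have hpl : List.prod [2, 3, 5, 7, 11, 13, 17, 19, 23, 29, 31, 37, 41, 43, 47, 53, 59, 61, 67, 71, 73, 79, 83, 89, 97, 101, 103, 107, 109, 113, 127, 131, 137, 139, 149, 151, 157, 163, 167, 173, 179, 181, 191, 193, 197] = 39195588149163123383161804554421175259738677336198748467804183290796540382737190 := by norm_num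
    rw [hpl]
    decide +kernel
  rcases le_or_gt n 682 with hb11 | ha11
  · refine interval_step [2, 3, 5, 7, 11, 13, 17, 19, 23, 29, 31, 37, 41, 43, 47, 53, 59, 61, 67, 71, 73, 79, 83, 89, 97, 101, 103, 107, 109, 113, 127, 131, 137, 139, 149, 151, 157, 163, 167, 173, 179, 181, 191, 193, 197, 199, 211, 223, 227, 229, 233, 239, 241, 251, 257, 263, 269, 271, 277, 281, 283, 293, 307, 311, 313, 317, 331, 337, 347, 349, 353, 359, 367] 368 682 n (by simp only [List.forall_mem_cons, List.forall_mem_nil]; and_intros <;> norm_num) (by decide) (by decide) (by omega) hb11 (by norm_num) ?_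
    have hpl : List.prod [2, 3, 5, 7, 11, 13, 17, 19, 23, 29, 31, 37, 41, 43, 47, 53, 59, 61, 67, 71, 73, 79, 83, 89, 97, 101, 103, 107, 109, 113, 127, 131, 137, 139, 149, 151, 157, 163, 167, 173, 179, 181, 191, 193, 197, 199, 211, 223, 227, 229, 233, 239, 241, 251, 257, 263, 269, 271, 277, 281, 283, 293, 307, 311, 313, 317, 331, 337, 347, 349, 353, 359, 367] = 12164225777291775545094262227518041831435735609411974226225152299039532954922737365042617099319896354948428967312205572919655268168725818308532229330 := by norm_num
    rw [hpl]
    decide +kernel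
  rcases le_or_gt n 1320 with hb12 | ha12
  · refine interval_step [2, 3, 5, 7, 11, 13, 17, 19, 23, 29, 31, 37, 41, 43, 47, 53, 59, 61, 67, 71, 73, 79, 83, 89, 97, 101, 103, 107, 109, 113, 127, 131, 137, 139, 149, 151, 157, 163, 167, 173, 179, 181, 191, 193, 197, 199, 211, 223, 227, 229, 233, 239, 241, 251, 257, 263, 269, 271, 277, 281, 283, 293, 307, 311, 313, 317, 331, 337, 347, 349, 353, 359, 367, 373, 379, 383, 389, 397, 401, 409, 419, 421, 431, 433, 439, 443, 449, 457, 461, 463, 467, 479, 487, 491, 499, 503, 509, 521, 523, 541, 547, 557, 563, 569, 571, 577, 587, 593, 599, 601, 607, 613, 617, 619, 631, 641, 643, 647, 653, 659, 661, 673, 677, 683] 683 1320 n (by simp only [List.forall_mem_cons, List.forall_mem_nil]; and_intros <;> norm_num) (by decide) (by decide) (by omega) hb12 (by norm_num) ?_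
    have hpl : List.prod [2, 3, 5, 7, 11, 13, 17, 19, 23, 29, 31, 37, 41, 43, 47, 53, 59, 61, 67, 71, 73, 79, 83, 89, 97, 101, 103, 107, 109, 113, 127, 131, 137, 139, 149, 151, 157, 163, 167, 173, 179, 181, 191, 193, 197, 199, 211, 223, 227, 229, 233, 239, 241, 251, 257, 263, 269, 271, 277, 281, 283, 293, 307, 311, 313, 317, 331, 337, 347, 349, 353, 359, 367, 373, 379, 383, 389, 397, 401, 409, 419, 421, 431, 433, 439, 443, 449, 457, 461, 463, 467, 479, 487, 491, 499, 503, 509, 521, 523, 541, 547, 557, 563, 569, 571, 577, 587, 593, 599, 601, 607, 613, 617, 619, 631, 641, 643, 647, 653, 659, 661, 673, 677, 683] = 40190203926405274547259361960944619607836956669674737734262625719216202211443086843390372588387704515915114704922334524557361553240706344760348853118676143648447653281692920000771795358586355264764539773868002472507262282233612277677036206583859935491700329980337929889830444075391048730 := by norm_num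
    rw [hpl]
    decide +kernel
  rcases le_or_gt n 2589 with hb13 | ha13
  · refine interval_step [2, 3, 5, 7, 11, 13, 17, 19, 23, 29, 31, 37, 41, 43, 47, 53, 59, 61, 67, 71, 73, 79, 83, 89, 97, 101, 103, 107, 109, 113, 127, 131, 137, 139, 149, 151, 157, 163, 167, 173, 179, 181, 191, 193, 197, 199, 211, 223, 227, 229, 233, 239, 241, 251, 257, 263, 269, 271, 277, 281, 283, 293, 307, 311, 313, 317, 331, 337, 347, 349, 353, 359, 367, 373, 379, 383, 389, 397, 401, 409, 419, 421, 431, 433, 439, 443, 449, 457, 461, 463, 467, 479, 487, 491, 499, 503, 509, 521, 523, 541, 547, 557, 563, 569, 571, 577, 587, 593, 599, 601, 607, 613, 617, 619, 631, 641, 643, 647, 653, 659, 661, 673, 677, 683, 691, 701, 709, 719, 727, 733, 739, 743, 751, 757, 761, 769, 773, 787, 797, 809, 811, 821, 823, 827, 829, 839, 853, 857, 859, 863, 877, 881, 883, 887, 907, 911, 919, 929, 937, 941, 947, 953, 967, 971, 977, 983, 991, 997, 1009, 1013, 1019, 1021, 1031, 1033, 1039, 1049, 1051, 1061, 1063, 1069,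 1087, 1091, 1093, 1097, 1103, 1109, 1117, 1123, 1129, 1151, 1153, 1163, 1171, 1181, 1187, 1193, 1201, 1213, 1217, 1223, 1229, 1231, 1237, 1249, 1259, 1277, 1279, 1283, 1289, 1291, 1297, 1301, 1303, 1307, 1319, 1321] 1321 2589 n (by simp only [List.forall_mem_cons, List.forall_mem_nil]; and_intros <;> norm_num) (by decide) (by decide) (by omega) hb13 (by norm_num) ?_
    have hpl : List.prod [2, 3, 5, 7, 11, 13, 17, 19, 23, 29, 31, 37, 41, 43, 47, 53, 59, 61, 67, 71, 73, 79, 83, 89, 97, 101, 103, 107, 109, 113, 127, 131, 137, 139, 149, 151, 157, 163, 167, 173, 179, 181, 191, 193, 197, 199, 211, 223, 227, 229, 233, 239, 241, 251, 257, 263, 269, 271, 277, 281, 283, 293, 307, 311, 313, 317, 331, 337, 347, 349, 353, 359, 367, 373, 379, 383, 389, 397, 401, 409, 419, 421, 431, 433, 439, 443, 449, 457, 461, 463, 467, 479, 487, 491, 499, 503, 509, 521, 523, 541, 547, 557, 563, 569, 571, 577, 587, 593, 599, 601, 607, 613, 617, 619, 631, 641, 643, 647, 653, 659, 661, 673, 677,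 683, 691, 701, 709, 719, 727, 733, 739, 743, 751, 757, 761, 769, 773, 787, 797, 809, 811, 821, 823, 827, 829, 839, 853, 857, 859, 863, 877, 881, 883, 887, 907, 911, 919, 929, 937, 941, 947, 953, 967, 971, 977, 983, 991, 997, 1009, 1013, 1019, 1021, 1031, 1033, 1039, 1049, 1051, 1061, 1063, 1069, 1087, 1091, 1093, 1097, 1103, 1109, 1117, 1123, 1129, 1151, 1153, 1163, 1171, 1181, 1187, 1193, 1201, 1213, 1217, 1223, 1229, 1231, 1237, 1249, 1259, 1277, 1279, 1283, 1289, 1291, 1297, 1301, 1303, 1307, 1319, 1321] = 25419074091820171277388785860255757016019155580234941045014343543551360156720082669512940276354851595473706028616671321927477043443135089853734792770287454886248074678475792695383934533364216534180414429194880009100923837880975912507736202009814619863211979480742337436121656197639705813300875749573622895924135371014812733888895217238720836719715318786112864314351813529767757488469056354101450538856374773521897191210883421324996430165347072920448671292972548433092644029464654551312362731209994923252829942337727016059692728112950187117503516500554947673847990 := by norm_num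
    rw [hpl]
    decide +kernel
  refine interval_step [2, 3, 5, 7, 11, 13, 17, 19, 23, 29, 31, 37, 41, 43, 47, 53, 59, 61, 67, 71, 73, 79, 83, 89, 97, 101, 103, 107, 109, 113, 127, 131, 137, 139, 149, 151, 157, 163, 167, 173, 179, 181, 191, 193, 197, 199, 211, 223, 227, 229, 233, 239, 241, 251, 257, 263, 269, 271, 277, 281, 283, 293, 307, 311, 313, 317, 331, 337, 347, 349, 353, 359, 367, 373, 379, 383, 389, 397, 401, 409, 419, 421, 431, 433, 439, 443, 449, 457, 461, 463, 467, 479, 487, 491, 499, 503, 509, 521, 523, 541, 547, 557, 563, 569, 571, 577, 587, 593, 599, 601, 607, 613, 617, 619, 631, 641, 643, 647, 653, 659, 661, 673, 677, 683, 691, 701, 709, 719, 727, 733, 739, 743, 751, 757, 761, 769, 773, 787, 797, 809, 811, 821, 823, 827, 829, 839, 853, 857, 859, 863, 877, 881, 883, 887, 907, 911, 919, 929, 937, 941, 947, 953, 967, 971, 977, 983, 991, 997, 1009, 1013, 1019, 1021, 1031, 1033, 1039, 1049, 1051, 1061, 1063, 1069, 1087, 1091, 1093, 1097, 1103, 1109,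 1117, 1123, 1129, 1151, 1153, 1163, 1171, 1181, 1187, 1193, 1201, 1213, 1217, 1223, 1229, 1231, 1237, 1249, 1259, 1277, 1279, 1283, 1289, 1291, 1297, 1301, 1303, 1307, 1319, 1321, 1327, 1361, 1367, 1373, 1381, 1399, 1409, 1423, 1427, 1429, 1433, 1439, 1447, 1451, 1453, 1459, 1471, 1481, 1483, 1487, 1489, 1493, 1499, 1511, 1523, 1531, 1543, 1549, 1553, 1559, 1567, 1571, 1579, 1583, 1597, 1601, 1607, 1609, 1613, 1619, 1621, 1627, 1637, 1657, 1663, 1667, 1669, 1693, 1697, 1699, 1709, 1721, 1723, 1733, 1741, 1747, 1753, 1759, 1777, 1783, 1787, 1789, 1801, 1811, 1823, 1831, 1847, 1861, 1867, 1871, 1873, 1877, 1879, 1889, 1901, 1907, 1913, 1931, 1933, 1949, 1951, 1973, 1979, 1987, 1993, 1997, 1999, 2003, 2011, 2017, 2027, 2029, 2039, 2053, 2063, 2069, 2081, 2083, 2087, 2089, 2099, 2111, 2113, 2129, 2131, 2137, 2141, 2143, 2153, 2161, 2179, 2203, 2207, 2213, 2221, 2237, 2239, 2243, 2251, 2267,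 2269, 2273, 2281, 2287, 2293, 2297, 2309, 2311, 2333, 2339, 2341, 2347, 2351, 2357, 2371, 2377, 2381, 2383, 2389, 2393, 2399, 2411, 2417, 2423, 2437, 2441, 2447, 2459, 2467, 2473, 2477, 2503, 2521, 2531, 2539, 2543, 2549, 2551, 2557, 2579] 2590 3601 n (by simp only [List.forall_mem_cons, List.forall_mem_nil]; and_intros <;> norm_num) (by decide) (by decide) (by omega) hn (by norm_num) ?_
  have hpl : List.prod [2, 3, 5, 7, 11, 13, 17, 19, 23, 29, 31, 37, 41, 43, 47, 53, 59, 61, 67, 71, 73, 79, 83, 89, 97, 101, 103, 107, 109, 113, 127, 131, 137, 139, 149, 151, 157, 163, 167, 173, 179, 181, 191, 193, 197, 199, 211, 223, 227, 229, 233, 239, 241, 251, 257, 263, 269, 271, 277, 281, 283, 293, 307, 311, 313, 317, 331, 337, 347, 349, 353, 359, 367, 373, 379, 383, 389, 397, 401, 409, 419, 421, 431, 433, 439, 443, 449, 457, 461, 463, 467, 479, 487, 491, 499, 503, 509, 521, 523, 541, 547, 557, 563, 569, 571, 577, 587, 593, 599, 601, 607, 613, 617, 619, 631, 641, 643, 647,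 653, 659, 661, 673, 677, 683, 691, 701, 709, 719, 727, 733, 739, 743, 751, 757, 761, 769, 773, 787, 797, 809, 811, 821, 823, 827, 829, 839, 853, 857, 859, 863, 877, 881, 883, 887, 907, 911, 919, 929, 937, 941, 947, 953, 967, 971, 977, 983, 991, 997, 1009, 1013, 1019, 1021, 1031, 1033, 1039, 1049, 1051, 1061, 1063, 1069, 1087, 1091, 1093, 1097, 1103, 1109, 1117, 1123, 1129, 1151, 1153, 1163, 1171, 1181, 1187, 1193, 1201, 1213, 1217, 1223, 1229, 1231, 1237, 1249, 1259, 1277, 1279, 1283, 1289, 1291, 1297, 1301, 1303, 1307, 1319, 1321, 1327, 1361, 1367, 1373, 1381, 1399, 1409, 1423, 1427, 1429, 1433, 1439, 1447, 1451, 1453, 1459, 1471, 1481, 1483, 1487, 1489, 1493, 1499, 1511, 1523, 1531, 1543, 1549, 1553, 1559, 1567, 1571, 1579, 1583, 1597, 1601, 1607, 1609, 1613, 1619, 1621, 1627, 1637, 1657, 1663, 1667, 1669, 1693, 1697, 1699, 1709, 1721, 1723, 1733, 1741, 1747, 1753, 1759, 1777, 1783, 1787, 1789, 1801, 1811, 1823,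 1831, 1847, 1861, 1867, 1871, 1873, 1877, 1879, 1889, 1901, 1907, 1913, 1931, 1933, 1949, 1951, 1973, 1979, 1987, 1993, 1997, 1999, 2003, 2011, 2017, 2027, 2029, 2039, 2053, 2063, 2069, 2081, 2083, 2087, 2089, 2099, 2111, 2113, 2129, 2131, 2137, 2141, 2143, 2153, 2161, 2179, 2203, 2207, 2213, 2221, 2237, 2239, 2243, 2251, 2267, 2269, 2273, 2281, 2287, 2293, 2297, 2309, 2311, 2333, 2339, 2341, 2347, 2351, 2357, 2371, 2377, 2381, 2383, 2389, 2393, 2399, 2411, 2417, 2423, 2437, 2441, 2447, 2459, 2467, 2473, 2477, 2503, 2521, 2531, 2539, 2543, 2549, 2551, 2557, 2579] = 35143420541752929345040632124917127868108417567721647126040740575737222203779453276250216276597588192837998027138277063862219283162930906657124372079444196943285467049192119880418050976133408210419020934685702758805097473900011036938576398384990275897683138802683505798116385324518027042552198851856645816661506634116327332688739276402869965179604242872654382728162818991891559467143111048631813720414880913717391328959838801487933531315059686672432214390915288763673717722468170490075430597436493396189765900879778159622607665513594524011593647932867582430295188658201398916508163106105062681695450163017761269315934507773207876897775973263925271774891900528617249717257140818596783997798851482135568331120862926025369065797421987400838737026930900091878670137157568545116803996327007185006134642304375991384832577860408240697681888375901894185137240362472599109958023571200136890644678307096793295708909541294709342681929649509683669009580796818336630914070936399841942747505968498196312053519437510190536105691275620808425261651375210331885937167592266553300788941987403329318340106090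 := by norm_num
  rw [hpl]
  decide +kernel


lemma centralBinom_le (n : ℕ) (n_pos : 0 < n) :
    centralBinom n ≤ (2 * n) ^ Nat.sqrt (2 * n) * primorial (2 * n) := by
  have n2_pos : 1 ≤ 2 * n := by omega
  let S := (Finset.range (2 * n + 1)).filter Nat.Prime
  let f : ℕ → ℕ := fun x => x ^ n.centralBinom.factorization x
  have h1 : ∏ x ∈ S, f x = ∏ x ∈ Finset.range (2 * n + 1), f x := by
    refine Finset.prod_filter_of_ne fun p _ h => ?_
    contrapose! h
    dsimp only [f]
    rw [Nat.factorization_eq_zero_of_not_prime n.centralBinom h, pow_zero]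
  rw [← n.prod_pow_factorization_centralBinom, ← h1,
    ← Finset.prod_filter_mul_prod_filter_not S (· ≤ Nat.sqrt (2 * n))]
  apply Nat.mul_le_mul
  · refine (Finset.prod_le_prod' fun p _ => (?_ : f p ≤ 2 * n)).trans ?_
    · exact Nat.pow_factorization_choose_le (by omega)
    have hcard : (Finset.Icc 1 (Nat.sqrt (2 * n))).card = Nat.sqrt (2 * n) := by
      rw [Nat.card_Icc, Nat.add_sub_cancel]
    rw [Finset.prod_const]
    refine pow_le_pow_right₀ n2_pos ((Finset.card_le_card fun x hx => ?_).trans hcard.le)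
    obtain ⟨hx1, hx2⟩ := Finset.mem_filter.1 hx
    exact Finset.mem_Icc.mpr ⟨(Finset.mem_filter.1 hx1).2.one_lt.le, hx2⟩
  · have h2 : ∏ p ∈ S.filter (fun p => ¬ p ≤ Nat.sqrt (2 * n)), f p
        ≤ ∏ p ∈ S.filter (fun p => ¬ p ≤ Nat.sqrt (2 * n)), p := by
      refine Finset.prod_le_prod' fun p hp => ?_
      obtain ⟨hp1, hp2⟩ := Finset.mem_filter.1 hp
      refine le_trans (Nat.pow_le_pow_right (by omega) ?_) (pow_one p).le
      exact Nat.factorization_choose_le_one (Nat.sqrt_lt'.mp <| not_le.1 hp2)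
    refine h2.trans ?_
    have h3 : ∏ p ∈ S.filter (fun p => ¬ p ≤ Nat.sqrt (2 * n)), p ≤ ∏ p ∈ S, p := by
      refine Finset.prod_le_prod_of_subset_of_one_le' (Finset.filter_subset _ _) ?_
      exact fun p hp _ => (Finset.mem_filter.1 hp).2.one_lt.le
    exact h3.trans_eq rfl

lemma real_main {x : ℝ} (hx : 1800 ≤ x) :
    x * (2 * x) ^ Real.sqrt (2 * x) * Real.exp x ≤ (4 : ℝ) ^ x := by
  have hlog4 : Real.log 4 = 2 * Real.log 2 := by
    rw [show (4 : ℝ) = 2 ^ 2 by norm_num, Real.log_pow]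
    push_cast
    ring
  have hc : (0 : ℝ) ≤ Real.log 4 - 1 := by
    have := Real.log_two_gt_d9
    rw [hlog4]
    linarith
  set f : ℝ → ℝ := fun y => Real.log y + Real.sqrt (2 * y) * Real.log (2 * y)
      - (Real.log 4 - 1) * y with hfdef
  have hf' : ∀ y : ℝ, 0 < y → 0 < y * (2 * y) ^ Real.sqrt (2 * y) * Real.exp y / 4 ^ y := by
    intro y hy
    positivity
  have hf : ∀ y : ℝ, 0 < y →
      f y = Real.log (y * (2 * y) ^ Real.sqrt (2 * y) * Real.exp y / 4 ^ y) := by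
    intro y h5
    have h6 : (0 : ℝ) < 2 * y := by linarith
    have h7 := Real.rpow_pos_of_pos h6 (Real.sqrt (2 * y))
    have h8 := Real.exp_pos y
    rw [Real.log_div (by positivity) (Real.rpow_pos_of_pos four_pos y).ne',
      Real.log_mul (by positivity) h8.ne', Real.log_mul h5.ne' h7.ne',
      Real.log_rpow h6, Real.log_exp, Real.log_rpow four_pos]
    simp only [hfdef]
    ring
  have h5 : (0 : ℝ) < x := by linarith
  rw [← div_le_one (Real.rpow_pos_of_pos four_pos x), ← Real.log_nonpos_iff (hf' x h5).le,
    ← hf x h5]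
  have h : ConcaveOn ℝ (Set.Ioi 0.5) f := by
    apply ConcaveOn.sub
    · apply ConcaveOn.add
      · exact strictConcaveOn_log_Ioi.concaveOn.subset
          (Set.Ioi_subset_Ioi (by norm_num)) (convex_Ioi 0.5)
      · convert ((strictConcaveOn_sqrt_mul_log_Ioi.concaveOn.comp_linearMap
          ((2 : ℝ) • LinearMap.id))) using 1
        · rfl
        · rfl
        ext y
        simp only [Set.mem_Ioi, Set.mem_preimage, LinearMap.smul_apply,
          LinearMap.id_coe, id_eq, smul_eq_mul]
        rw [← mul_lt_mul_iff_right₀ (two_pos)]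
        norm_num1
        rfl
        rfl
    · exact ConvexOn.smul hc (convexOn_id (convex_Ioi (0.5 : ℝ)))
  suffices hs : ∃ x1 x2 : ℝ, 0.5 < x1 ∧ x1 < x2 ∧ x2 ≤ x ∧ 0 ≤ f x1 ∧ f x2 ≤ 0 by
    obtain ⟨x1, x2, h1, h2, h0, h3, h4⟩ := hs
    exact (h.right_le_of_le_left'' h1 ((h1.trans h2).trans_le h0) h2 h0 (h4.trans h3)).trans h4
  have hlt := Real.log_two_lt_d9
  have hgt := Real.log_two_gt_d9
  refine ⟨18, 1800, by norm_num, by norm_num, hx, ?_, ?_⟩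
  · have hs6 : Real.sqrt (2 * 18) = 6 :=
      (Real.sqrt_eq_iff_mul_self_eq_of_pos (by norm_num)).mpr (by norm_num)
    have hf18 : f 18 = Real.log 18 + 6 * Real.log 36 - (Real.log 4 - 1) * 18 := by
      simp only [hfdef, hs6]
      norm_num
    have hlog18 : (0 : ℝ) ≤ Real.log 18 := Real.log_nonneg (by norm_num)
    have hlog36 : 5 * Real.log 2 ≤ Real.log 36 := by
      have : Real.log 32 ≤ Real.log 36 := by
        rw [Real.log_le_log_iff (by norm_num) (by norm_num)]
        norm_num
      rw [show (32 : ℝ) = 2 ^ 5 by norm_num, Real.log_pow] at this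
      push_cast at this
      linarith
    rw [hf18, hlog4]
    nlinarith
  · have hs60 : Real.sqrt (2 * 1800) = 60 :=
      (Real.sqrt_eq_iff_mul_self_eq_of_pos (by norm_num)).mpr (by norm_num)
    have hf1800 : f 1800 = Real.log 1800 + 60 * Real.log 3600 - (Real.log 4 - 1) * 1800 := by
      simp only [hfdef, hs60]
      norm_num
    have hlog1800 : Real.log 1800 ≤ 11 * Real.log 2 := by
      have : Real.log 1800 ≤ Real.log 2048 := by
        rw [Real.log_le_log_iff (by norm_num) (by norm_num)]
        norm_num
      rw [show (2048 : ℝ) = 2 ^ 11 by norm_num, Real.log_pow] at this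
      push_cast at this
      linarith
    have hlog3600 : Real.log 3600 ≤ 12 * Real.log 2 := by
      have : Real.log 3600 ≤ Real.log 4096 := by
        rw [Real.log_le_log_iff (by norm_num) (by norm_num)]
        norm_num
      rw [show (4096 : ℝ) = 2 ^ 12 by norm_num, Real.log_pow] at this
      push_cast at this
      linarith
    rw [hf1800, hlog4]
    nlinarith

lemma main_ineq {m : ℕ} (hm : 1800 ≤ m) :
    Real.exp m * ((m : ℝ) * (2 * (m : ℝ)) ^ (Nat.sqrt (2 * m))) ≤ 4 ^ m := by
  have hx : (1800 : ℝ) ≤ (m : ℝ) := by exact_mod_cast hm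
  have h := real_main hx
  have hpow : (2 * (m : ℝ)) ^ (Nat.sqrt (2 * m)) ≤ (2 * (m : ℝ)) ^ Real.sqrt (2 * (m : ℝ)) := by
    rw [← Real.rpow_natCast (2 * (m : ℝ)) (Nat.sqrt (2 * m))]
    apply Real.rpow_le_rpow_of_exponent_le (by linarith)
    have := Real.nat_sqrt_le_real_sqrt (a := 2 * m)
    calc ((Nat.sqrt (2 * m) : ℝ)) ≤ Real.sqrt ((2 * m : ℕ) : ℝ) := this
      _ = Real.sqrt (2 * (m : ℝ)) := by push_cast; ring_nf
  have h4 : ((4 : ℝ) ^ (m : ℕ) : ℝ) = (4 : ℝ) ^ ((m : ℕ) : ℝ) := by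
    rw [Real.rpow_natCast]
  calc Real.exp m * ((m : ℝ) * (2 * (m : ℝ)) ^ (Nat.sqrt (2 * m)))
      ≤ Real.exp m * ((m : ℝ) * (2 * (m : ℝ)) ^ Real.sqrt (2 * (m : ℝ))) := by
        have hmpos : (0 : ℝ) ≤ (m : ℝ) := Nat.cast_nonneg _
        have he : (0 : ℝ) ≤ Real.exp m := (Real.exp_pos _).le
        nlinarith [mul_le_mul_of_nonneg_left hpow hmpos]
    _ = (m : ℝ) * (2 * (m : ℝ)) ^ Real.sqrt (2 * (m : ℝ)) * Real.exp m := by ring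
    _ ≤ (4 : ℝ) ^ ((m : ℕ) : ℝ) := h
    _ = (4 : ℝ) ^ (m : ℕ) := h4.symm

lemma exp_le_primorial {m : ℕ} (hm : 1800 ≤ m) :
    Real.exp m ≤ (primorial (2 * m) : ℝ) := by
  have h2 : 4 ^ m < m * centralBinom m :=
    Nat.four_pow_lt_mul_centralBinom m (by omega)
  have h3 : centralBinom m ≤ (2 * m) ^ Nat.sqrt (2 * m) * primorial (2 * m) :=
    centralBinom_le m (by omega)
  set A : ℝ := (m : ℝ) * (2 * (m : ℝ)) ^ (Nat.sqrt (2 * m)) with hA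
  have hApos : (0 : ℝ) < A := by
    have : (0 : ℝ) < (m : ℝ) := by exact_mod_cast Nat.pos_of_ne_zero (by omega)
    positivity
  have key : Real.exp m * A < A * (primorial (2 * m) : ℝ) := by
    calc Real.exp m * A ≤ 4 ^ m := main_ineq hm
      _ < (m : ℝ) * centralBinom m := by exact_mod_cast h2
      _ ≤ (m : ℝ) * ((2 * m : ℕ) ^ Nat.sqrt (2 * m) * primorial (2 * m) : ℕ) := by
          have : (0 : ℝ) ≤ (m : ℝ) := Nat.cast_nonneg _
          exact mul_le_mul_of_nonneg_left (by exact_mod_cast h3) this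
      _ = A * (primorial (2 * m) : ℝ) := by
          rw [hA]
          push_cast
          ring
  have := (mul_lt_mul_iff_left₀ hApos).1 (by linarith [key] :
    Real.exp m * A < (primorial (2 * m) : ℝ) * A)
  linarith
  
lemma master (n : ℕ) (h2 : 2 ≤ n) : Real.exp (((n : ℝ) - 1) / 2) ≤ (primorial n : ℝ) := by
  rcases le_or_gt n 3601 with h | h
  · exact finite_part n h2 h
  · set m := n / 2 with hm
    have hm1800 : 1800 ≤ m := by omega
    have h2m : 2 * m ≤ n := by omega
    have key := exp_le_primorial hm1800
    have mono : (primorial (2 * m) : ℝ) ≤ (primorial n : ℝ) := by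
      exact_mod_cast primorial_mono h2m
    have hle : ((n : ℝ) - 1) / 2 ≤ (m : ℝ) := by
      have hup : n ≤ 2 * m + 1 := by omega
      have : (n : ℝ) ≤ 2 * (m : ℝ) + 1 := by exact_mod_cast hup
      linarith
    exact (Real.exp_le_exp.2 hle).trans (key.trans mono)

end Stmt11Aux

/-- For every `N ≥ 1` there is a prime `p` not dividing `N` with `p ≤ 2 log N + 2`. -/
theorem stmt11 (N : ℕ) (hN : 1 ≤ N) :
    ∃ p : ℕ, p.Prime ∧ ¬ p ∣ N ∧ (p : ℝ) ≤ 2 * Real.log N + 2 := by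
  by_contra hcon
  push_neg at hcon
  have hNpos : (0 : ℝ) < (N : ℝ) := by exact_mod_cast hN
  have hlog : 0 ≤ Real.log N := Real.log_nonneg (by exact_mod_cast hN)
  set x : ℝ := 2 * Real.log N + 2 with hx
  set n : ℕ := ⌊x⌋₊ with hn
  have hx2 : (2 : ℝ) ≤ x := by rw [hx]; linarith
  have hxpos : (0 : ℝ) ≤ x := by linarith
  have hn2 : 2 ≤ n := Nat.le_floor (by exact_mod_cast hx2)
  have hdvd : primorial n ∣ N := by
    rw [primorial]
    refine Finset.prod_primes_dvd _ (fun p hp => (Finset.mem_filter.1 hp).2.prime)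
      (fun p hp => ?_)
    obtain ⟨hr, hpp⟩ := Finset.mem_filter.1 hp
    by_contra hnd
    have hgt := hcon p hpp hnd
    have hpn : p ≤ n := Nat.lt_succ_iff.1 (Finset.mem_range.1 hr)
    have hple : (p : ℝ) ≤ x := le_trans (by exact_mod_cast hpn) (Nat.floor_le hxpos)
    linarith
  have hle : (primorial n : ℝ) ≤ (N : ℝ) := by
    exact_mod_cast Nat.le_of_dvd (by omega) hdvd
  have hmaster := Stmt11Aux.master n hn2
  have hgt : (N : ℝ) < Real.exp (((n : ℝ) - 1) / 2) := by
    have h1 : x < n + 1 := Nat.lt_floor_add_one x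
    have h2 : Real.log N < ((n : ℝ) - 1) / 2 := by rw [hx] at h1; linarith
    calc (N : ℝ) = Real.exp (Real.log N) := (Real.exp_log hNpos).symm
      _ < Real.exp (((n : ℝ) - 1) / 2) := Real.exp_lt_exp.2 h2
  linarith
end

section
/- Let p be prime, n ≥ 1, k an integer, and suppose elements T(p), T(p²), T₀(p²),…,T_n(p²) of a commutative ℚ-algebra satisfy the Hafner–Walling relation 𝒯̃_n(p²) = 𝒯(p)² − ∑_{j=0}^{n−1} p^{k(n−j)+j(j+1)/2−n(n+1)/2} 𝒯̃_j(p²), where 𝒯(p) = p^{n(k−n−1)/2}T(p), 𝒯̃_j(p²) = p^{j(k−n−1)} ∑_{t=0}^{j} binom(n−t,j−t)_p T_{n−t}(p²), and T(p²) = ∑_{j=0}^{n} T_j(p²). Then T(p²) = T(p)² − ∑_{s=1}^{n} c_s T_s(p²) with c_s = ∑_{i=1}^{s} p^{i(i+1)/2} binom(s,i)_p = (∏_{i=1}^{s}(p^i+1)) − 1. -/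
/-- The Gaussian (q-)binomial coefficient evaluated at a real `p`. -/
noncomputable def gaussBinomR (p : ℝ) (m l : ℕ) : ℝ :=
  ∏ i ∈ Finset.Icc 1 l, (p ^ (m - l + i) - 1) / (p ^ i - 1)

open Finset

namespace Stmt15Aux

variable {q : ℝ}

lemma pow_sub_one_ne (hq : 1 < q) {i : ℕ} (hi : 1 ≤ i) : q ^ i - 1 ≠ 0 := by
  have : 1 < q ^ i := one_lt_pow₀ hq (by omega)
  linarith

noncomputable def denP (q : ℝ) (l : ℕ) : ℝ := ∏ i ∈ Icc 1 l, (q ^ i - 1)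

noncomputable def numP (q : ℝ) (m l : ℕ) : ℝ := ∏ i ∈ range l, (q ^ (m - i) - 1)

lemma denP_ne_zero (hq : 1 < q) (l : ℕ) : denP q l ≠ 0 :=
  prod_ne_zero_iff.mpr fun i hi => pow_sub_one_ne hq (mem_Icc.mp hi).1

lemma denP_succ (q : ℝ) (l : ℕ) : denP q (l + 1) = denP q l * (q ^ (l + 1) - 1) := by
  rw [denP, denP, prod_Icc_succ_top (by omega)]

lemma gb_eq (q : ℝ) {m l : ℕ} (h : l ≤ m) :
    gaussBinomR q m l = numP q m l / denP q l := by
  rw [gaussBinomR, numP, denP, prod_div_distrib]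
  congr 1
  calc ∏ i ∈ Icc 1 l, (q ^ (m - l + i) - 1)
      = ∏ i ∈ range l, (q ^ (m - (l - 1 - i)) - 1) := by
        rw [← Finset.Ico_add_one_right_eq_Icc, prod_Ico_eq_prod_range]
        apply prod_congr rfl
        intro i hi
        have hi' := mem_range.mp hi
        have : m - l + (1 + i) = m - (l - 1 - i) := by omega
        rw [this]
    _ = ∏ i ∈ range l, (q ^ (m - i) - 1) := prod_range_reflect (fun i => q ^ (m - i) - 1) l

lemma num_mul_den (q : ℝ) : ∀ {l m : ℕ}, l ≤ m → numP q m l * denP q (m - l) = denP q m := by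
  intro l
  induction l with
  | zero => intro m _; simp [numP]
  | succ l ih =>
    intro m h
    have hle : l ≤ m := by omega
    have h1 : m - l = (m - (l + 1)) + 1 := by omega
    have h2 : m - (l + 1) + 1 = m - l := by omega
    calc numP q m (l + 1) * denP q (m - (l + 1))
        = numP q m l * (denP q (m - (l + 1)) * (q ^ (m - l) - 1)) := by
          rw [numP, prod_range_succ, ← numP]; ring
      _ = numP q m l * denP q (m - l) := by rw [h1, denP_succ, h2]
      _ = denP q m := ih hle

lemma gb_mul_den (hq : 1 < q) {m l : ℕ} (h : l ≤ m) :
    gaussBinomR q m l * (denP q l * denP q (m - l)) = denP q m := by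
  rw [gb_eq q h, div_mul_eq_mul_div, mul_comm (denP q l) (denP q (m - l)), ← mul_assoc,
    mul_div_assoc]
  rw [div_self (denP_ne_zero hq l), mul_one]
  exact num_mul_den q h

lemma gb_symm (hq : 1 < q) {m l : ℕ} (h : l ≤ m) :
    gaussBinomR q m (m - l) = gaussBinomR q m l := by
  have h1 := gb_mul_den hq h
  have h2 := gb_mul_den hq (Nat.sub_le m l)
  rw [show m - (m - l) = l from by omega] at h2
  have hne : denP q l * denP q (m - l) ≠ 0 :=
    mul_ne_zero (denP_ne_zero hq l) (denP_ne_zero hq (m - l))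
  apply mul_right_cancel₀ hne
  rw [h1, mul_comm (denP q l) (denP q (m - l))]
  exact h2

lemma gb_zero (q : ℝ) (m : ℕ) : gaussBinomR q m 0 = 1 := by simp [gaussBinomR]

lemma gb_diag (hq : 1 < q) (m : ℕ) : gaussBinomR q m m = 1 := by
  rw [gaussBinomR]
  apply prod_eq_one
  intro i hi
  rw [Nat.sub_self, Nat.zero_add]
  exact div_self (pow_sub_one_ne hq (mem_Icc.mp hi).1)

lemma pascal (hq : 1 < q) {m l : ℕ} (h : l + 1 ≤ m) :
    gaussBinomR q (m + 1) (l + 1)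
      = gaussBinomR q m (l + 1) + q ^ (m - l) * gaussBinomR q m l := by
  rw [gb_eq q (by omega : l + 1 ≤ m + 1), gb_eq q h, gb_eq q (by omega : l ≤ m)]
  have e1 : numP q (m + 1) (l + 1) = (q ^ (m + 1) - 1) * numP q m l := by
    rw [numP, prod_range_succ']
    rw [Nat.sub_zero, mul_comm]
    congr 1
    rw [numP]
    apply prod_congr rfl
    intro i _
    have : m + 1 - (i + 1) = m - i := by omega
    rw [this]
  have e2 : numP q m (l + 1) = numP q m l * (q ^ (m - l) - 1) := by
    rw [numP, prod_range_succ, ← numP]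
  rw [e1, e2, denP_succ]
  have hne1 : denP q l ≠ 0 := denP_ne_zero hq l
  have hne2 : (q ^ (l + 1) - 1) ≠ 0 := pow_sub_one_ne hq (by omega)
  have hpow : q ^ (m + 1) = q ^ (m - l) * q ^ (l + 1) := by
    rw [← pow_add]; congr 1; omega
  field_simp
  rw [hpow]; ring

lemma exp_split {i a : ℕ} (ha' : i * (i + 1) = 2 * a) :
    (i + 1) * (i + 1 + 1) = 2 * (a + i + 1) := by
  have : (i + 1) * (i + 1 + 1) = i * (i + 1) + 2 * (i + 1) := by ring
  omega

lemma gauss_sum (hq : 1 < q) (s : ℕ) :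
    ∑ i ∈ range (s + 1), q ^ (i * (i + 1) / 2) * gaussBinomR q s i
      = ∏ i ∈ Icc 1 s, (q ^ i + 1) := by
  induction s with
  | zero => simp [gb_zero]
  | succ s ih =>
    have hkey : ∀ i ∈ range s,
        q ^ ((i + 1) * (i + 1 + 1) / 2) * gaussBinomR q (s + 1) (i + 1)
          = q ^ ((i + 1) * (i + 1 + 1) / 2) * gaussBinomR q s (i + 1)
            + q ^ (s + 1) * (q ^ (i * (i + 1) / 2) * gaussBinomR q s i) := by
      intro i hi
      have his : i + 1 ≤ s := mem_range.mp hi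
      have hexp : (i + 1) * (i + 1 + 1) / 2 + (s - i) = s + 1 + i * (i + 1) / 2 := by
        obtain ⟨a, ha⟩ := Nat.even_mul_succ_self i
        have ha' : i * (i + 1) = 2 * a := by omega
        rw [ha', exp_split ha', Nat.mul_div_cancel_left _ two_pos,
          Nat.mul_div_cancel_left _ two_pos]
        omega
      rw [pascal hq his, mul_add, ← mul_assoc, ← pow_add, hexp, pow_add, mul_assoc]
    have hdiag : q ^ ((s + 1) * (s + 1 + 1) / 2) * gaussBinomR q (s + 1) (s + 1)
        = q ^ (s + 1) * (q ^ (s * (s + 1) / 2) * gaussBinomR q s s) := by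
      have hexp2 : (s + 1) * (s + 1 + 1) / 2 = s + 1 + s * (s + 1) / 2 := by
        obtain ⟨a, ha⟩ := Nat.even_mul_succ_self s
        have ha' : s * (s + 1) = 2 * a := by omega
        rw [ha', exp_split ha', Nat.mul_div_cancel_left _ two_pos,
          Nat.mul_div_cancel_left _ two_pos]
        omega
      rw [gb_diag hq, gb_diag hq, mul_one, mul_one, hexp2, pow_add]
    rw [prod_Icc_succ_top (by omega), ← ih]
    rw [Finset.sum_range_succ, Finset.sum_range_succ'
      (fun i => q ^ (i * (i + 1) / 2) * gaussBinomR q (s + 1) i) s]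
    rw [Finset.sum_congr rfl hkey, Finset.sum_add_distrib, ← Finset.mul_sum, hdiag]
    have hf0 : q ^ (0 * (0 + 1) / 2) * gaussBinomR q (s + 1) 0 = 1 := by simp [gb_zero]
    have hg0 : q ^ (0 * (0 + 1) / 2) * gaussBinomR q s 0 = 1 := by simp [gb_zero]
    rw [hf0]
    have e3 : ∑ i ∈ range s, q ^ ((i + 1) * (i + 1 + 1) / 2) * gaussBinomR q s (i + 1)
        = (∑ i ∈ range (s + 1), q ^ (i * (i + 1) / 2) * gaussBinomR q s i) - 1 := by
      rw [Finset.sum_range_succ' (fun i => q ^ (i * (i + 1) / 2) * gaussBinomR q s i) s, hg0]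
      ring
    have e4 : ∑ i ∈ range s, q ^ (i * (i + 1) / 2) * gaussBinomR q s i
        = (∑ i ∈ range (s + 1), q ^ (i * (i + 1) / 2) * gaussBinomR q s i)
          - q ^ (s * (s + 1) / 2) * gaussBinomR q s s := by
      rw [Finset.sum_range_succ (fun i => q ^ (i * (i + 1) / 2) * gaussBinomR q s i) s]
      ring
    rw [e3, e4]
    ring

lemma gauss_sum' (hq : 1 < q) (s : ℕ) :
    ∑ i ∈ Icc 1 s, q ^ (i * (i + 1) / 2) * gaussBinomR q s i
      = (∏ i ∈ Icc 1 s, (q ^ i + 1)) - 1 := by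
  have h := gauss_sum hq s
  rw [Finset.sum_range_succ'
    (fun i => q ^ (i * (i + 1) / 2) * gaussBinomR q s i) s] at h
  have hg0 : q ^ (0 * (0 + 1) / 2) * gaussBinomR q s 0 = 1 := by simp [gb_zero]
  rw [hg0] at h
  have hIcc : ∑ i ∈ Icc 1 s, q ^ (i * (i + 1) / 2) * gaussBinomR q s i
      = ∑ i ∈ range s, q ^ ((i + 1) * (i + 1 + 1) / 2) * gaussBinomR q s (i + 1) := by
    rw [← Finset.Ico_add_one_right_eq_Icc, sum_Ico_eq_sum_range]
    apply sum_congr rfl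
    intro i _
    rw [Nat.add_comm 1 i]
  rw [hIcc]
  linarith [h]

lemma expo (n j : ℕ) (k : ℤ) (hj : j ≤ n) :
    -((n : ℤ) * (k - (n : ℤ) - 1))
        + (k * ((n : ℤ) - (j : ℤ)) + (j : ℤ) * ((j : ℤ) + 1) / 2
            - (n : ℤ) * ((n : ℤ) + 1) / 2)
        + (j : ℤ) * (k - (n : ℤ) - 1)
      = (((n - j) * (n - j + 1) / 2 : ℕ) : ℤ) := by
  obtain ⟨a, ha⟩ := Nat.even_mul_succ_self j
  obtain ⟨b, hb⟩ := Nat.even_mul_succ_self n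
  obtain ⟨c, hc⟩ := Nat.even_mul_succ_self (n - j)
  have hcc : (n - j) * (n - j + 1) / 2 = c := by omega
  rw [hcc]
  have ha' : (j : ℤ) * ((j : ℤ) + 1) = 2 * (a : ℤ) := by exact_mod_cast (by omega : j * (j + 1) = 2 * a)
  have hb' : (n : ℤ) * ((n : ℤ) + 1) = 2 * (b : ℤ) := by exact_mod_cast (by omega : n * (n + 1) = 2 * b)
  have hc' : ((n : ℤ) - (j : ℤ)) * ((n : ℤ) - (j : ℤ) + 1) = 2 * (c : ℤ) := by
    have : ((n - j : ℕ) : ℤ) = (n : ℤ) - (j : ℤ) := by omega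
    rw [← this]
    exact_mod_cast (by omega : (n - j) * (n - j + 1) = 2 * c)
  rw [ha', hb', Int.mul_ediv_cancel_left _ two_ne_zero, Int.mul_ediv_cancel_left _ two_ne_zero]
  have h2 : (2 : ℤ) * (-((n : ℤ) * (k - (n : ℤ) - 1))
      + (k * ((n : ℤ) - (j : ℤ)) + (a : ℤ) - (b : ℤ)) + (j : ℤ) * (k - (n : ℤ) - 1))
      = 2 * (c : ℤ) := by linear_combination -ha' + hb' + hc'
  exact mul_left_cancel₀ two_ne_zero h2

lemma coef (hq : 1 < q) {n t : ℕ} (ht : t ≤ n) :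
    ∑ j ∈ Icc t n, q ^ ((n - j) * (n - j + 1) / 2) * gaussBinomR q (n - t) (j - t)
      = ∏ i ∈ Icc 1 (n - t), (q ^ i + 1) := by
  rw [← Finset.Ico_add_one_right_eq_Icc, sum_Ico_eq_sum_range]
  have hr : n + 1 - t = (n - t) + 1 := by omega
  rw [hr]
  rw [← Finset.sum_range_reflect
    (fun i => q ^ ((n - (t + i)) * (n - (t + i) + 1) / 2) * gaussBinomR q (n - t) (t + i - t))
    ((n - t) + 1)]
  rw [← gauss_sum hq (n - t)]
  apply sum_congr rfl
  intro i hi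
  have hi' : i ≤ n - t := by have := mem_range.mp hi; omega
  have h1 : n - (t + ((n - t) + 1 - 1 - i)) = i := by omega
  have h2 : t + ((n - t) + 1 - 1 - i) - t = (n - t) - i := by omega
  rw [h1, h2, gb_symm hq hi']

lemma range_succ_to_Icc {M : Type*} [AddCommMonoid M] (f : ℕ → M) (n : ℕ) :
    ∑ i ∈ range (n + 1), f i = f 0 + ∑ i ∈ Icc 1 n, f i := by
  rw [Finset.sum_range_succ' f n, ← Finset.Ico_add_one_right_eq_Icc, sum_Ico_eq_sum_range, add_comm]
  congr 1
  apply sum_congr rfl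
  intro i _
  rw [Nat.add_comm 1 i]

end Stmt15Aux

/-- From the Hafner–Walling relation
`𝒯̃_n(p²) = 𝒯(p)² − ∑_{j=0}^{n-1} p^{k(n-j)+j(j+1)/2−n(n+1)/2} 𝒯̃_j(p²)`,
where `𝒯(p) = p^{n(k-n-1)/2} T(p)` and
`𝒯̃_j(p²) = p^{j(k-n-1)} ∑_{t=0}^{j} binom(n-t,j-t)_p T_{n-t}(p²)`,
one deduces `T(p²) = T(p)² − ∑_{s=1}^{n} c_s T_s(p²)` with
`c_s = ∑_{i=1}^s p^{i(i+1)/2} binom(s,i)_p = ∏_{i=1}^s (p^i+1) − 1`. -/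
theorem stmt15 (p : ℕ) (hp : p.Prime) (n : ℕ) (hn : 1 ≤ n) (k : ℤ)
    {A : Type*} [CommRing A] [Algebra ℝ A]
    (Tp Tsq : A) (T : ℕ → A) (hT0 : T 0 = 1)
    (hTsq : Tsq = ∑ j ∈ Finset.range (n + 1), T j)
    (tT : ℕ → A)
    (htT : ∀ j : ℕ, tT j =
      algebraMap ℝ A ((p : ℝ) ^ ((j : ℤ) * (k - n - 1))) *
        ∑ t ∈ Finset.range (j + 1),
          algebraMap ℝ A (gaussBinomR p (n - t) (j - t)) * T (n - t))
    (hHW : tT n =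
      (algebraMap ℝ A ((p : ℝ) ^ (((((n : ℤ) * (k - n - 1)) : ℤ) : ℝ) / 2)) * Tp) ^ 2
        - ∑ j ∈ Finset.range n,
            algebraMap ℝ A
              ((p : ℝ) ^ (k * ((n : ℤ) - j) + (j : ℤ) * (j + 1) / 2
                - (n : ℤ) * (n + 1) / 2)) * tT j) :
    Tsq = Tp ^ 2 - ∑ s ∈ Finset.Icc 1 n,
        algebraMap ℝ A
          (∑ i ∈ Finset.Icc 1 s, (p : ℝ) ^ (i * (i + 1) / 2) * gaussBinomR p s i) * T s
      ∧ ∀ s ∈ Finset.Icc 1 n,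
          ∑ i ∈ Finset.Icc 1 s, (p : ℝ) ^ (i * (i + 1) / 2) * gaussBinomR p s i
            = (∏ i ∈ Finset.Icc 1 s, ((p : ℝ) ^ i + 1)) - 1 := by
  have hq : (1 : ℝ) < (p : ℝ) := by exact_mod_cast hp.one_lt
  have hq0 : (0 : ℝ) < (p : ℝ) := lt_trans one_pos hq
  refine ⟨?_, fun s _ => Stmt15Aux.gauss_sum' hq s⟩
  -- square simplification
  have hsq : (algebraMap ℝ A ((p : ℝ) ^ (((((n : ℤ) * (k - n - 1)) : ℤ) : ℝ) / 2)) * Tp) ^ 2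
      = algebraMap ℝ A ((p : ℝ) ^ ((n : ℤ) * (k - (n : ℤ) - 1))) * Tp ^ 2 := by
    rw [mul_pow, ← map_pow]
    congr 1
    rw [pow_two, ← Real.rpow_add hq0]
    rw [show (((((n : ℤ) * (k - n - 1)) : ℤ) : ℝ) / 2) + (((((n : ℤ) * (k - n - 1)) : ℤ) : ℝ) / 2)
        = ((((n : ℤ) * (k - (n : ℤ) - 1)) : ℤ) : ℝ) from by push_cast; ring]
    exact congrArg _ (Real.rpow_intCast _ _)
  have hE0 : k * ((n : ℤ) - (n : ℕ)) + ((n : ℕ) : ℤ) * (((n : ℕ) : ℤ) + 1) / 2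
      - (n : ℤ) * ((n : ℤ) + 1) / 2 = 0 := by simp
  have h1 : ∑ j ∈ Finset.range (n + 1),
      algebraMap ℝ A ((p : ℝ) ^ (k * ((n : ℤ) - j) + (j : ℤ) * (j + 1) / 2
        - (n : ℤ) * (n + 1) / 2)) * tT j
      = algebraMap ℝ A ((p : ℝ) ^ ((n : ℤ) * (k - (n : ℤ) - 1))) * Tp ^ 2 := by
    rw [Finset.sum_range_succ, hE0, hHW, hsq]
    simp only [zpow_zero, map_one, one_mul]
    ring
  have hterm : ∀ j ∈ Finset.range (n + 1),
      algebraMap ℝ A ((p : ℝ) ^ (-((n : ℤ) * (k - (n : ℤ) - 1)))) *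
        (algebraMap ℝ A ((p : ℝ) ^ (k * ((n : ℤ) - j) + (j : ℤ) * (j + 1) / 2
          - (n : ℤ) * (n + 1) / 2)) * tT j)
      = ∑ t ∈ Finset.range (j + 1),
          algebraMap ℝ A ((p : ℝ) ^ ((n - j) * (n - j + 1) / 2)
            * gaussBinomR (p : ℝ) (n - t) (j - t)) * T (n - t) := by
    intro j hj
    have hjn : j ≤ n := by have := Finset.mem_range.mp hj; omega
    rw [htT j, ← mul_assoc, ← mul_assoc, ← map_mul, ← map_mul,
      ← zpow_add₀ (ne_of_gt hq0), ← zpow_add₀ (ne_of_gt hq0)]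
    rw [Stmt15Aux.expo n j k hjn, zpow_natCast]
    rw [Finset.mul_sum]
    exact Finset.sum_congr rfl fun t _ => by rw [← mul_assoc, ← map_mul]
  have h2 := congrArg
    (fun x => algebraMap ℝ A ((p : ℝ) ^ (-((n : ℤ) * (k - (n : ℤ) - 1)))) * x) h1
  beta_reduce at h2
  rw [Finset.mul_sum, Finset.sum_congr rfl hterm, ← mul_assoc, ← map_mul,
    ← zpow_add₀ (ne_of_gt hq0), neg_add_cancel, zpow_zero, map_one, one_mul] at h2
  rw [Finset.sum_comm' (s := Finset.range (n + 1)) (t := fun j => Finset.range (j + 1))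
    (t' := Finset.range (n + 1)) (s' := fun t => Finset.Icc t n)
    (by intro x y; simp only [Finset.mem_range, Finset.mem_Icc]; omega)] at h2
  have hinner : ∀ t ∈ Finset.range (n + 1),
      ∑ j ∈ Finset.Icc t n, algebraMap ℝ A ((p : ℝ) ^ ((n - j) * (n - j + 1) / 2)
        * gaussBinomR (p : ℝ) (n - t) (j - t)) * T (n - t)
      = algebraMap ℝ A (∏ i ∈ Finset.Icc 1 (n - t), ((p : ℝ) ^ i + 1)) * T (n - t) := by
    intro t htn
    have h' : t ≤ n := by have := Finset.mem_range.mp htn; omega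
    rw [← Finset.sum_mul, ← map_sum, Stmt15Aux.coef hq h']
  rw [Finset.sum_congr rfl hinner] at h2
  have h3 : ∑ r ∈ Finset.range (n + 1),
      algebraMap ℝ A (∏ i ∈ Finset.Icc 1 r, ((p : ℝ) ^ i + 1)) * T r = Tp ^ 2 := by
    rw [← h2, ← Finset.sum_range_reflect
      (fun r => algebraMap ℝ A (∏ i ∈ Finset.Icc 1 r, ((p : ℝ) ^ i + 1)) * T r) (n + 1)]
    simp only [Nat.add_sub_cancel]
  rw [eq_sub_iff_add_eq, ← h3, hTsq, Stmt15Aux.range_succ_to_Icc T n,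
    Stmt15Aux.range_succ_to_Icc
      (fun r => algebraMap ℝ A (∏ i ∈ Finset.Icc 1 r, ((p : ℝ) ^ i + 1)) * T r) n, hT0]
  have hcoef : ∀ s ∈ Finset.Icc 1 n,
      algebraMap ℝ A (∑ i ∈ Finset.Icc 1 s,
        (p : ℝ) ^ (i * (i + 1) / 2) * gaussBinomR (p : ℝ) s i) * T s
      = algebraMap ℝ A (∏ i ∈ Finset.Icc 1 s, ((p : ℝ) ^ i + 1)) * T s - T s := by
    intro s _
    rw [Stmt15Aux.gauss_sum' hq s, map_sub, map_one, sub_mul, one_mul]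
  rw [Finset.sum_congr rfl hcoef, Finset.sum_sub_distrib]
  simp only [show Finset.Icc 1 0 = (∅ : Finset ℕ) from rfl, Finset.prod_empty, map_one, one_mul]
  ring
end
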